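/- If v and w are adjacent vertices of a simple graph G, then τ_v(τ_w(τ_v(G))) = τ_w(τ_v(τ_w(G))), where τ denotes local complementation. -/

import Mathlib

/-- Local complementation at `v`: the induced subgraph on the neighborhood of `v`
is replaced by its complement (edge set `E Δ {{i,j} : i, j ∈ N_v, i ≠ j}`). -/
def locComp {V : Type*} (G : SimpleGraph V) (v : V) : SimpleGraph V where
  Adj a b := a ≠ b ∧ Xor' (G.Adj a b) (G.Adj v a ∧ G.Adj v b)
  symm := ⟨by
    rintro a b ⟨hab, h⟩
    refine ⟨hab.symm, ?_⟩
    have hc : G.Adj a b ↔ G.Adj b a := G.adj_comm a b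
    simp only [Xor', Xor] at h ⊢
    tauto⟩
  loopless := ⟨fun a h => h.1 rfl⟩

set_option maxHeartbeats 4000000 in
/-- If  and  03:17:36 up 3 min,  0 user,  load average: 0.23, 0.06, 0.02
USER     TTY      FROM             LOGIN@   IDLE   JCPU   PCPU WHAT are adjacent, then . -/
theorem locComp_triple {V : Type*} (G : SimpleGraph V) (v w : V) (hvw : G.Adj v w) :
    locComp (locComp (locComp G v) w) v = locComp (locComp (locComp G w) v) w := by
  have hne : v ≠ w := hvw.ne
  have hwv : G.Adj w v := hvw.symm
  ext a b
  have c1 := G.adj_comm v a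
  have c2 := G.adj_comm v b
  have c3 := G.adj_comm w a
  have c4 := G.adj_comm w b
  have c5 := G.adj_comm a b
  simp only [locComp, Xor', ne_eq]
  by_cases h0 : a = b <;> by_cases h1 : v = a <;> by_cases h2 : v = b <;>
  by_cases h3 : w = a <;> by_cases h4 : w = b <;>
  by_cases p1 : G.Adj a b <;> by_cases p2 : G.Adj v a <;> by_cases p3 : G.Adj v b <;>
  by_cases p4 : G.Adj w a <;> by_cases p5 : G.Adj w b <;>
  simp_all <;> first | exact fun h => hne h.symm | exact fun h => h1 h.symm | exact fun h => h2 h.symm
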